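/- For integer n ≥ 1, α > 0, x > 0, y > 0, the noncentral gamma cdf satisfies G_{1+n}(x, y) = G_1(x, y) − e^{-y} Σ_{k=1}^n g_{1+k}(x) ₀F₁(1+k; x y), where g_β(x) = x^{β-1} e^{-x}/Γ(β) and ₀F₁(β; z) = Σ_{m≥0} z^m / ((β)_m m!). -/

import Mathlib

open Real

/-- The gamma density with shape `β`. -/
noncomputable def gdens (β x : ℝ) : ℝ := x ^ (β - 1) * Real.exp (-x) / Real.Gamma β

/-- The gamma cdf with shape `α`. -/
noncomputable def Gcdf (α x : ℝ) : ℝ := ∫ ξ in (0:ℝ)..x, gdens α ξ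

/-- The noncentral gamma cdf `G_α(x, y)`. -/
noncomputable def ncGcdf (α x y : ℝ) : ℝ :=
  Real.exp (-y) * ∑' m : ℕ, Gcdf (α + m) x * y ^ m / m.factorial

/-- The confluent hypergeometric limit function `₀F₁(β; z)`. -/
noncomputable def F01 (β z : ℝ) : ℝ :=
  ∑' m : ℕ, z ^ m / ((∏ i ∈ Finset.range m, (β + i)) * m.factorial)

lemma gdens_nat (j : ℕ) (t : ℝ) :
    gdens (1 + j) t = t ^ j * Real.exp (-t) / j.factorial := by
  unfold gdens
  rw [show (1 : ℝ) + j - 1 = (j : ℝ) by ring, Real.rpow_natCast, add_comm (1:ℝ),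
    Real.Gamma_nat_eq_factorial]

lemma cont_aux (j : ℕ) :
    Continuous fun t : ℝ => t ^ j * Real.exp (-t) / (j.factorial : ℝ) := by
  fun_prop

lemma Gcdf_succ (j : ℕ) (x : ℝ) :
    Gcdf (1 + ((j+1 : ℕ) : ℝ)) x
      = Gcdf (1 + (j : ℝ)) x - x ^ (j+1) * Real.exp (-x) / (j+1).factorial := by
  have hj1 : ((j+1).factorial : ℝ) ≠ 0 := Nat.cast_ne_zero.2 (j+1).factorial_ne_zero
  have hj0 : (j.factorial : ℝ) ≠ 0 := Nat.cast_ne_zero.2 j.factorial_ne_zero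
  have hF : ∀ t ∈ Set.uIcc (0:ℝ) x,
      HasDerivAt (fun t : ℝ => t ^ (j+1) * Real.exp (-t) / (j+1).factorial)
        (t ^ j * Real.exp (-t) / j.factorial
          - t ^ (j+1) * Real.exp (-t) / (j+1).factorial) t := by
    intro t _
    have h1 : HasDerivAt (fun t : ℝ => t ^ (j+1)) (((j:ℝ)+1) * t ^ j) t := by
      simpa using hasDerivAt_pow (j+1) t
    have h2 : HasDerivAt (fun t : ℝ => Real.exp (-t)) (-Real.exp (-t)) t := by
      simpa using (hasDerivAt_neg t).exp
    have h3 := (h1.mul h2).div_const ((j+1).factorial : ℝ)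
    refine h3.congr_deriv ?_
    rw [Nat.factorial_succ]
    push_cast
    field_simp
    ring
  have hint : IntervalIntegrable
      (fun t : ℝ => t ^ j * Real.exp (-t) / j.factorial
        - t ^ (j+1) * Real.exp (-t) / (j+1).factorial) MeasureTheory.volume 0 x :=
    ((cont_aux j).sub (cont_aux (j+1))).intervalIntegrable 0 x
  have key := intervalIntegral.integral_eq_sub_of_hasDerivAt hF hint
  simp only [zero_pow (Nat.succ_ne_zero j), neg_zero, Real.exp_zero, zero_mul, zero_div,
    sub_zero] at key
  have hsub := intervalIntegral.integral_sub
      ((cont_aux j).intervalIntegrable (μ := MeasureTheory.volume) 0 x)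
      ((cont_aux (j+1)).intervalIntegrable (μ := MeasureTheory.volume) 0 x)
  rw [hsub] at key
  unfold Gcdf
  have e1 : (fun t : ℝ => gdens (1 + ((j+1 : ℕ) : ℝ)) t)
      = fun t : ℝ => t ^ (j+1) * Real.exp (-t) / (j+1).factorial := by
    funext t; exact gdens_nat (j+1) t
  have e2 : (fun t : ℝ => gdens (1 + (j:ℝ)) t)
      = fun t : ℝ => t ^ j * Real.exp (-t) / j.factorial := by
    funext t; exact gdens_nat j t
  simp only [e1, e2]
  linarith [key]

lemma Gcdf_nonneg (j : ℕ) {x : ℝ} (hx : 0 ≤ x) : 0 ≤ Gcdf (1 + (j:ℝ)) x := by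
  unfold Gcdf
  apply intervalIntegral.integral_nonneg hx
  intro t ht
  rw [gdens_nat]
  exact div_nonneg (mul_nonneg (pow_nonneg ht.1 j) (Real.exp_pos _).le)
    (Nat.cast_nonneg _)

lemma Gcdf_le (j : ℕ) {x : ℝ} (hx : 0 ≤ x) :
    Gcdf (1 + (j:ℝ)) x ≤ x ^ (j+1) / j.factorial := by
  unfold Gcdf
  simp only [gdens_nat]
  have hmono : ∀ t ∈ Set.Icc (0:ℝ) x,
      t ^ j * Real.exp (-t) / j.factorial ≤ x ^ j / j.factorial := by
    intro t ht
    calc t ^ j * Real.exp (-t) / j.factorial ≤ x ^ j * 1 / j.factorial := by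
          gcongr
          · exact ht.1
          · exact ht.2
          · exact Real.exp_le_one_iff.2 (neg_nonpos.2 ht.1)
      _ = x ^ j / j.factorial := by ring
  calc (∫ t in (0:ℝ)..x, t ^ j * Real.exp (-t) / j.factorial)
      ≤ ∫ _ in (0:ℝ)..x, (x ^ j / j.factorial : ℝ) :=
        intervalIntegral.integral_mono_on hx ((cont_aux j).intervalIntegrable 0 x)
          (intervalIntegrable_const) hmono
    _ = x * (x ^ j / j.factorial) := by simp [mul_div_assoc]
    _ = x ^ (j+1) / j.factorial := by ring

lemma summable_aux (k : ℕ) {x y : ℝ} (hx : 0 < x) (hy : 0 < y) :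
    Summable (fun m : ℕ => Gcdf (1 + (k:ℝ) + m) x * y ^ m / m.factorial) := by
  have hcast : ∀ m : ℕ, (1 : ℝ) + k + m = 1 + ((k + m : ℕ) : ℝ) := by
    intro m; push_cast; ring
  refine Summable.of_nonneg_of_le ?_ ?_
    ((Real.summable_pow_div_factorial (x*y)).mul_left (x ^ (k+1)))
  · intro m
    rw [hcast m]
    exact div_nonneg (mul_nonneg (Gcdf_nonneg (k+m) hx.le) (pow_nonneg hy.le m))
      (Nat.cast_nonneg _)
  · intro m
    rw [hcast m]
    have h1 : Gcdf (1 + ((k+m : ℕ) : ℝ)) x ≤ x ^ (k+m+1) / (k+m).factorial :=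
      Gcdf_le (k+m) hx.le
    have h2 : (1 : ℝ) ≤ ((k+m).factorial : ℝ) := by
      exact_mod_cast Nat.one_le_iff_ne_zero.2 (k+m).factorial_ne_zero
    have h3 : x ^ (k+m+1) / ((k+m).factorial : ℝ) ≤ x ^ (k+m+1) := by
      rw [div_le_iff₀ (by linarith)]
      nlinarith [pow_pos hx (k+m+1)]
    have h4 : Gcdf (1 + ((k+m : ℕ) : ℝ)) x ≤ x ^ (k+m+1) := le_trans h1 h3
    have hym : 0 ≤ y ^ m := pow_nonneg hy.le m
    have hfm : (0:ℝ) < m.factorial := by exact_mod_cast m.factorial_pos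
    calc Gcdf (1 + ((k+m : ℕ) : ℝ)) x * y ^ m / m.factorial
        ≤ x ^ (k+m+1) * y ^ m / m.factorial := by
          gcongr
      _ = x ^ (k+1) * ((x*y) ^ m / m.factorial) := by
          rw [mul_pow]; ring

lemma fact_prod (a : ℕ) : ∀ m : ℕ,
    (((a+m).factorial : ℝ)) = (a.factorial : ℝ) * ∏ i ∈ Finset.range m, ((a:ℝ) + 1 + i)
  | 0 => by simp
  | (m+1) => by
    rw [Finset.prod_range_succ, ← mul_assoc, ← fact_prod a m,
      show a + (m+1) = (a+m)+1 from rfl, Nat.factorial_succ]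
    push_cast
    ring

lemma step_lemma (k : ℕ) {x y : ℝ} (hx : 0 < x) (hy : 0 < y) :
    ncGcdf (1 + (k:ℝ)) x y - ncGcdf (1 + ((k+1 : ℕ) : ℝ)) x y
      = Real.exp (-y) * (gdens (1 + ((k+1 : ℕ) : ℝ)) x * F01 (1 + ((k+1 : ℕ) : ℝ)) (x*y)) := by
  unfold ncGcdf
  rw [← mul_sub, ← Summable.tsum_sub (summable_aux k hx hy) (summable_aux (k+1) hx hy)]
  congr 1
  rw [gdens_nat]
  unfold F01
  rw [← tsum_mul_left]
  apply tsum_congr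
  intro m
  have h1 : (1:ℝ) + k + m = 1 + ((k+m : ℕ) : ℝ) := by push_cast; ring
  have h2 : (1:ℝ) + ((k+1 : ℕ) : ℝ) + m = 1 + (((k+m)+1 : ℕ) : ℝ) := by push_cast; ring
  rw [h1, h2, Gcdf_succ (k+m) x]
  have hP : (∏ i ∈ Finset.range m, ((1:ℝ) + ((k+1:ℕ):ℝ) + i))
      = ∏ i ∈ Finset.range m, (((k+1:ℕ):ℝ) + 1 + i) :=
    Finset.prod_congr rfl (fun i _ => by push_cast; ring)
  have hEq : (k+m)+1 = (k+1)+m := by omega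
  rw [hP, hEq, fact_prod (k+1) m]
  have hf1 : (((k+1).factorial : ℝ)) ≠ 0 := Nat.cast_ne_zero.2 (k+1).factorial_ne_zero
  have hf3 : ((m.factorial : ℝ)) ≠ 0 := Nat.cast_ne_zero.2 m.factorial_ne_zero
  have hP0 : (∏ i ∈ Finset.range m, (((k+1:ℕ):ℝ) + 1 + i)) ≠ 0 :=
    ne_of_gt (Finset.prod_pos fun i _ => by positivity)
  field_simp
  ring

theorem stmt8 (n : ℕ) (hn : 1 ≤ n) (x y : ℝ) (hx : 0 < x) (hy : 0 < y) :
    ncGcdf (1 + n) x y =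
      ncGcdf 1 x y -
        Real.exp (-y) * ∑ k ∈ Finset.Icc 1 n, gdens (1 + k) x * F01 (1 + k) (x * y) := by
  clear hn
  induction n with
  | zero => simp
  | succ n ih =>
    rw [Finset.sum_Icc_succ_top (Nat.le_add_left 1 n), mul_add]
    have hstep := step_lemma n hx hy
    linarith [hstep, ih]
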